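/- Let S be a countable semigroup and T a finite subset of S. Then S is ℵ₀-categorical if and only if, for every n ≥ 1, the restriction of the relation ~_{S,n} to (S \ T)^n has only finitely many equivalence classes. -/
import Mathlib


/-- Two `n`-tuples of a semigroup are automorphically equivalent if some semigroup
automorphism maps one to the other componentwise. -/
def AutRel (S : Type*) [Semigroup S] {n : ℕ} (a b : Fin n → S) : Prop :=
  ∃ φ : S ≃* S, ∀ k, φ (a k) = b k

/-- A semigroup is ℵ₀-categorical if, for every `n ≥ 1`, the action of its automorphism
group on `n`-tuples has only finitely many orbits. -/
def Aleph0Categorical (S : Type*) [Semigroup S] : Prop :=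
  ∀ n : ℕ, 1 ≤ n → ∃ t : Set (Fin n → S), t.Finite ∧
    ∀ a : Fin n → S, ∃ b ∈ t, AutRel S b a

open scoped Pointwise

section Aux

variable {S : Type*} [Semigroup S]

/-- The natural action of `MulAut M` on `M`, for `M` only a `Mul` (mathlib's instance
requires a monoid). -/
instance mulAutApplyMulAction {M : Type*} [Mul M] : MulAction (MulAut M) M where
  smul f a := f a
  one_smul _ := rfl
  mul_smul _ _ _ := rfl

lemma mulAut_smul_def {M : Type*} [Mul M] (f : MulAut M) (a : M) : f • a = f a := rfl

lemma autRel_symm {n : ℕ} {a b : Fin n → S} (h : AutRel S a b) : AutRel S b a := by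
  obtain ⟨φ, hφ⟩ := h
  exact ⟨φ.symm, fun k => by rw [← hφ k, MulEquiv.symm_apply_apply]⟩

lemma autRel_trans {n : ℕ} {a b c : Fin n → S} (h1 : AutRel S a b) (h2 : AutRel S b c) :
    AutRel S a c := by
  obtain ⟨φ, hφ⟩ := h1; obtain ⟨ψ, hψ⟩ := h2
  exact ⟨φ.trans ψ, fun k => by rw [MulEquiv.trans_apply, hφ k, hψ k]⟩

lemma stabilizer_finiteIndex_of_finite_orbit {G X : Type*} [Group G] [MulAction G X] {x : X}
    (h : (MulAction.orbit G x).Finite) : (MulAction.stabilizer G x).FiniteIndex := by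
  constructor
  rw [MulAction.index_stabilizer]
  exact ((Set.ncard_pos h).mpr ⟨x, MulAction.mem_orbit_self x⟩).ne'

/-- Some automorphism simultaneously moves all infinite-orbit coordinates off `T`
(B. H. Neumann's lemma). -/
lemma exists_move_off (T : Set S) (hT : T.Finite) {n : ℕ} (a : Fin n → S) :
    ∃ φ : MulAut S, ∀ k,
      (MulAction.orbit (MulAut S) (a k)).Finite ∨ φ (a k) ∉ T := by
  classical
  by_contra hcon
  push_neg at hcon
  let g : Fin n × S → MulAut S := fun p =>
    if h : ∃ ψ : MulAut S, ψ (a p.1) = p.2 then h.choose else 1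
  let s : Finset (Fin n × S) :=
    (Finset.univ.filter fun k => ¬ (MulAction.orbit (MulAut S) (a k)).Finite) ×ˢ hT.toFinset
  have hcovers : ⋃ i ∈ s,
      (g i) • ((MulAction.stabilizer (MulAut S) (a i.1) : Subgroup (MulAut S)) : Set (MulAut S))
        = Set.univ := by
    rw [Set.eq_univ_iff_forall]
    intro φ
    obtain ⟨k, hk1, hk2⟩ := hcon φ
    refine Set.mem_iUnion₂.mpr ⟨((k, φ (a k)) : Fin n × S), Finset.mem_product.mpr
        ⟨Finset.mem_filter.mpr ⟨Finset.mem_univ _, hk1⟩, hT.mem_toFinset.mpr hk2⟩, ?_⟩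
    · have hex : ∃ ψ : MulAut S, ψ (a k) = φ (a k) := ⟨φ, rfl⟩
      have hg : g (k, φ (a k)) (a k) = φ (a k) := by
        simp only [g, dif_pos hex]
        exact hex.choose_spec
      rw [mem_leftCoset_iff, SetLike.mem_coe, MulAction.mem_stabilizer_iff, mul_smul,
        inv_smul_eq_iff, mulAut_smul_def, mulAut_smul_def, hg]
  obtain ⟨⟨k, u⟩, hks, hfin⟩ := Subgroup.exists_finiteIndex_of_leftCoset_cover hcovers
  have hk : ¬ (MulAction.orbit (MulAut S) (a k)).Finite :=
    (Finset.mem_filter.mp (Finset.mem_product.mp hks).1).2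
  have hzero : (MulAction.stabilizer (MulAut S) (a k)).index = 0 := by
    rw [MulAction.index_stabilizer, Set.Infinite.ncard hk]
  exact hfin.index_ne_zero hzero

end Aux

theorem aleph0Categorical_iff_off_finite_subset (S : Type*) [Semigroup S] [Countable S]
    (T : Set S) (hT : T.Finite) :
    Aleph0Categorical S ↔
      ∀ n : ℕ, 1 ≤ n → ∃ t : Set (Fin n → S), t.Finite ∧
        (∀ b ∈ t, ∀ k, b k ∉ T) ∧
        ∀ a : Fin n → S, (∀ k, a k ∉ T) → ∃ b ∈ t, AutRel S b a := by
  classical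
  constructor
  · -- forward direction: pick off-`T` representatives
    intro hcat n hn
    obtain ⟨t, htf, htcov⟩ := hcat n hn
    set P : (Fin n → S) → Prop :=
      fun b => ∃ a : Fin n → S, (∀ k, a k ∉ T) ∧ AutRel S b a with hP
    set f : (Fin n → S) → (Fin n → S) := fun b => if h : P b then h.choose else b with hf
    refine ⟨f '' {b ∈ t | P b}, (htf.subset (Set.sep_subset _ _)).image f, ?_, ?_⟩
    · rintro b ⟨b', ⟨hb't, hPb'⟩, rfl⟩ k
      rw [hf]
      simp only [dif_pos hPb']
      exact hPb'.choose_spec.1 k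
    · intro a ha
      obtain ⟨b, hbt, hba⟩ := htcov a
      have hPb : P b := ⟨a, ha, hba⟩
      refine ⟨f b, ⟨b, ⟨hbt, hPb⟩, rfl⟩, ?_⟩
      have hfb : f b = hPb.choose := dif_pos hPb
      rw [hfb]
      exact autRel_trans (autRel_symm hPb.choose_spec.2) hba
  · -- reverse direction
    intro hyp n hn
    by_cases hzex : ∃ z : S, z ∉ T
    swap
    · push_neg at hzex
      have : Finite S := Set.finite_univ_iff.mp (hT.subset fun x _ => hzex x)
      exact ⟨Set.univ, Set.finite_univ,
        fun a => ⟨a, Set.mem_univ a, ⟨MulEquiv.refl S, fun _ => rfl⟩⟩⟩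
    obtain ⟨z, hzT⟩ := hzex
    obtain ⟨t, htf, htoff, htcov⟩ := hyp n hn
    -- `W`: elements of `T` with finite orbit
    set W : Set S := {s : S | s ∈ T ∧ (MulAction.orbit (MulAut S) s).Finite} with hWdef
    have hWfin : W.Finite := hT.subset fun s hs => hs.1
    -- `H`: pointwise stabilizer of `W`, of finite index
    set H : Subgroup (MulAut S) := ⨅ w ∈ hWfin.toFinset, MulAction.stabilizer (MulAut S) w
      with hHdef
    haveI hHfin : H.FiniteIndex := by
      rw [hHdef]
      exact Subgroup.finiteIndex_iInf' _ fun w hw =>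
        stabilizer_finiteIndex_of_finite_orbit ((hWfin.mem_toFinset.mp hw).2)
    have hHfix : ∀ h ∈ H, ∀ w ∈ W, h w = w := by
      intro h hh w hw
      have h1 := Subgroup.mem_iInf.mp (hHdef ▸ hh) w
      have h2 := Subgroup.mem_iInf.mp h1 (hWfin.mem_toFinset.mpr hw)
      exact h2
    -- `t'`: representatives for `H`-classes of off-`T` tuples
    set t' : Set (Fin n → S) := Set.image2
      (fun (q : MulAut S ⧸ H) (b : Fin n → S) => fun k => (Quotient.out q)⁻¹ (b k))
      Set.univ t with ht'def
    have ht'f : t'.Finite := Set.Finite.image2 _ Set.finite_univ htf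
    have ht'cov : ∀ x : Fin n → S, (∀ k, x k ∉ T) →
        ∃ c ∈ t', ∃ h ∈ H, ∀ k, h (c k) = x k := by
      intro x hx
      obtain ⟨b, hbt, φ₀, hφ₀⟩ := htcov x hx
      set φ : MulAut S := φ₀ with hφdef
      set q : MulAut S ⧸ H := QuotientGroup.mk φ⁻¹ with hq
      refine ⟨fun k => (Quotient.out q)⁻¹ (b k),
        Set.mem_image2_of_mem (Set.mem_univ q) hbt, φ * Quotient.out q, ?_, ?_⟩
      · have h1 : (QuotientGroup.mk (Quotient.out q) : MulAut S ⧸ H) = QuotientGroup.mk φ⁻¹ := by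
          rw [hq]; exact Quotient.out_eq' _
        have h2 := QuotientGroup.eq.mp h1
        have h3 := H.inv_mem h2
        simpa [mul_inv_rev] using h3
      · intro k
        rw [MulAut.mul_apply, MulAut.inv_def, MulEquiv.apply_symm_apply]
        exact hφ₀ k
    -- the final set of representatives
    set F : (Fin n → Option ↥hWfin.toFinset) → (Fin n → S) → (Fin n → S) :=
      fun p c => fun k => (p k).elim (c k) (fun w => (w : S)) with hF
    refine ⟨Set.image2 F Set.univ t', Set.Finite.image2 _ Set.finite_univ ht'f, ?_⟩
    intro a
    obtain ⟨φ, hφ⟩ := exists_move_off T hT a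
    set a₁ : Fin n → S := fun k => φ (a k) with ha₁
    have ha₁W : ∀ k, a₁ k ∈ T → a₁ k ∈ W := by
      intro k hk
      rcases hφ k with hfin | hout
      · refine ⟨hk, ?_⟩
        have horb : MulAction.orbit (MulAut S) (a₁ k) = MulAction.orbit (MulAut S) (a k) :=
          MulAction.orbit_smul φ (a k)
        rw [horb]
        exact hfin
      · exact absurd hk hout
    set p : Fin n → Option ↥hWfin.toFinset := fun k =>
      if h : a₁ k ∈ hWfin.toFinset then some ⟨a₁ k, h⟩ else none with hp
    set b : Fin n → S := fun k => (p k).elim (a₁ k) (fun _ => z) with hb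
    have hboff : ∀ k, b k ∉ T := by
      intro k
      rw [hb]
      by_cases h : a₁ k ∈ hWfin.toFinset
      · simp only [hp, dif_pos h, Option.elim]
        exact hzT
      · simp only [hp, dif_neg h, Option.elim]
        intro hTk
        exact h (hWfin.mem_toFinset.mpr (ha₁W k hTk))
    obtain ⟨c, hct', h, hhH, hhc⟩ := ht'cov b hboff
    refine ⟨F p c, Set.mem_image2_of_mem (Set.mem_univ p) hct',
      ⟨MulEquiv.trans (h : S ≃* S) ((φ : S ≃* S).symm), ?_⟩⟩
    intro k
    rw [MulEquiv.trans_apply]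
    have key : h (F p c k) = a₁ k := by
      rw [hF]
      by_cases hk : a₁ k ∈ hWfin.toFinset
      · simp only [hp, dif_pos hk, Option.elim]
        exact hHfix h hhH (a₁ k) (hWfin.mem_toFinset.mp hk)
      · simp only [hp, dif_neg hk, Option.elim]
        rw [hhc k, hb]
        simp only [hp, dif_neg hk, Option.elim]
    rw [key]
    exact MulEquiv.symm_apply_apply φ (a k)
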